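/- arXiv:math/0503242 — 2 statements merged into one kernel-verified Lean document; each statement's English description precedes it below -/
import Mathlib

section
/- For an algebra A and a hypersubstitution σ, an identity p = q holds in the derived algebra A_σ if and only if the identity σ(p) = σ(q) holds in A. -/
/-- A similarity type: operation symbols with arities. -/
structure Signature where
  I : Type
  arity : I → ℕ

/-- Terms of a signature over a variable type. -/
inductive Term (sig : Signature) (V : Type) : Type
  | var : V → Term sig V
  | app : (i : sig.I) → (Fin (sig.arity i) → Term sig V) → Term sig V

/-- Substitution of terms for variables. -/
def Term.bind {sig : Signature} {V W : Type} : Term sig V → (V → Term sig W) → Term sig W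
  | .var v, f => f v
  | .app i ts, f => .app i (fun k => (ts k).bind f)

/-- An algebra of a signature (with nonempty carrier). -/
structure Alg (sig : Signature) where
  carrier : Type
  interp : (i : sig.I) → (Fin (sig.arity i) → carrier) → carrier
  nonempty : Nonempty carrier

/-- Evaluation of a term in an algebra under an assignment. -/
def Alg.eval {sig : Signature} {V : Type} (A : Alg sig) (v : V → A.carrier) :
    Term sig V → A.carrier
  | .var x => v x
  | .app i ts => A.interp i (fun k => A.eval v (ts k))

/-- A hypersubstitution assigns to each operation symbol a term of the same arity. -/
abbrev Hyp (sig : Signature) := (i : sig.I) → Term sig (Fin (sig.arity i))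

/-- The extension of a hypersubstitution to all terms. -/
def hypApply {sig : Signature} {V : Type} (σ : Hyp sig) : Term sig V → Term sig V
  | .var x => .var x
  | .app i ts => (σ i).bind (fun k => hypApply σ (ts k))

/-- The derived algebra `A_σ`. -/
def derive {sig : Signature} (σ : Hyp sig) (A : Alg sig) : Alg sig :=
  ⟨A.carrier, fun i args => A.eval args (σ i), A.nonempty⟩

/-- An identity `p = q` holds in an algebra. -/
def Satisfies {sig : Signature} (A : Alg sig) (e : Term sig ℕ × Term sig ℕ) : Prop :=
  ∀ v : ℕ → A.carrier, A.eval v e.1 = A.eval v e.2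

/-- Models of a set of identities. -/
def Models {sig : Signature} (E : Set (Term sig ℕ × Term sig ℕ)) : Set (Alg sig) :=
  {A | ∀ e ∈ E, Satisfies A e}

/-- Equational theory of a class of algebras. -/
def Th {sig : Signature} (K : Set (Alg sig)) : Set (Term sig ℕ × Term sig ℕ) :=
  {e | ∀ A ∈ K, Satisfies A e}

/-- The variety generated by a class. -/
def varGen {sig : Signature} (K : Set (Alg sig)) : Set (Alg sig) := Models (Th K)

/-- A class is a variety iff it is an equational class. -/
def IsVariety {sig : Signature} (V : Set (Alg sig)) : Prop := ∃ E, V = Models E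

/-- The derived variety `V_σ`. -/
def derivedVariety {sig : Signature} (V : Set (Alg sig)) (σ : Hyp sig) : Set (Alg sig) :=
  varGen {B | ∃ A ∈ V, B = derive σ A}

/-- A class is trivial if all its algebras are one-element. -/
def TrivialVar {sig : Signature} (V : Set (Alg sig)) : Prop :=
  ∀ A ∈ V, Subsingleton A.carrier

/-- A variety is fluid if it contains no proper derived variety. -/
def Fluid {sig : Signature} (V : Set (Alg sig)) : Prop :=
  ∀ σ : Hyp sig, derivedVariety V σ ⊆ V → derivedVariety V σ = V

/-- The signature with one binary operation symbol. -/
def sig2 : Signature := ⟨Unit, fun _ => 2⟩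

/-- The binary operation of a `sig2`-algebra. -/
def bop (A : Alg sig2) (x y : A.carrier) : A.carrier := A.interp () ![x, y]

/-- The hypersubstitution sending `x·y` to the first projection `x`. -/
def proj1 : Hyp sig2 := fun _ => Term.var ⟨0, by simp [sig2]⟩

/-- The variety of bands (idempotent semigroups). -/
def Bands : Set (Alg sig2) :=
  {A | (∀ x y z, bop A (bop A x y) z = bop A x (bop A y z)) ∧ (∀ x, bop A x x = x)}

/-- The variety of left-zero semigroups. -/
def LeftZero : Set (Alg sig2) := {A | ∀ x y, bop A x y = x}

lemma eval_bind {sig : Signature} {V W : Type} (A : Alg sig) (v : W → A.carrier)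
    (t : Term sig V) (f : V → Term sig W) :
    A.eval v (t.bind f) = A.eval (fun x => A.eval v (f x)) t := by
  induction t with
  | var x => rfl
  | app i ts ih => simp only [Term.bind, Alg.eval, ih]

lemma eval_derive {sig : Signature} (A : Alg sig) (σ : Hyp sig) (v : ℕ → A.carrier)
    (t : Term sig ℕ) : (derive σ A).eval v t = A.eval v (hypApply σ t) := by
  induction t with
  | var x => rfl
  | app i ts ih =>
    simp only [Alg.eval, hypApply, eval_bind]
    congr 1
    funext k
    exact ih k

/-- `p = q` holds in `A_σ` iff `σ(p) = σ(q)` holds in `A`. -/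
theorem satisfies_derive_iff {sig : Signature} (A : Alg sig) (σ : Hyp sig)
    (p q : Term sig ℕ) :
    Satisfies (derive σ A) (p, q) ↔ Satisfies A (hypApply σ p, hypApply σ q) := by
  unfold Satisfies
  simp only [eval_derive]
  exact forall_congr' fun v => iff_of_eq (congrArg₂ (· = ·) (eval_derive A σ v p) (eval_derive A σ v q))
end

section
/- The variety V_3 of bands defined by y·x = y·x·y is not fluid: for the hypersubstitution σ(x·y) = x, the derived variety σ(V_3) is the variety of left-zero semigroups, which is a proper subvariety of V_3. -/
/-- The variety V₃ of bands defined by y·x = y·x·y. -/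
def V3 : Set (Alg sig2) :=
  {A | A ∈ Bands ∧ ∀ y x, bop A y x = bop A (bop A y x) y}


/-- In a left-zero algebra, the interpretation is the first projection. -/
lemma leftzero_interp {B : Alg sig2} (hB : B ∈ LeftZero) (args : Fin 2 → B.carrier) :
    B.interp () args = args 0 := by
  have harg : ![args 0, args 1] = args := by
    funext k; fin_cases k <;> rfl
  have := hB (args 0) (args 1)
  rwa [bop, harg] at this

/-- The derived algebra of any algebra under proj1 is left-zero. -/
lemma derive_leftzero (A : Alg sig2) : derive proj1 A ∈ LeftZero := by
  intro x y
  rfl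

/-- A left-zero algebra equals its own derived algebra under proj1. -/
lemma leftzero_eq_derive {B : Alg sig2} (hB : B ∈ LeftZero) : B = derive proj1 B := by
  have h : B.interp = (derive proj1 B).interp := by
    funext i args
    exact leftzero_interp hB args
  obtain ⟨c, op, ne⟩ := B
  simp only [derive] at h ⊢
  congr 1

lemma leftzero_in_V3 : LeftZero ⊆ V3 := by
  intro B hB
  refine ⟨⟨fun x y z => ?_, fun x => ?_⟩, fun y x => ?_⟩
  · rw [hB (bop B x y) z, hB x y, hB x (bop B y z)]
  · exact hB x x
  · rw [hB y x]
    exact (hB y y).symm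

/-- The two-element meet-semilattice. -/
def boolAnd : Alg sig2 :=
  ⟨Bool, fun _ args => args ⟨0, Nat.zero_lt_two⟩ && args ⟨1, Nat.one_lt_two⟩, ⟨true⟩⟩

lemma bop_boolAnd (x y : Bool) : bop boolAnd x y = (x && y) := rfl

lemma boolAnd_in_V3 : boolAnd ∈ V3 := by
  refine ⟨⟨fun x y z => ?_, fun x => ?_⟩, fun y x => ?_⟩ <;>
    skip
  · exact Bool.and_assoc x y z
  · exact Bool.and_self x
  · cases x <;> cases y <;> rfl

lemma boolAnd_not_leftzero : boolAnd ∉ LeftZero := by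
  intro h
  have := h true false
  rw [bop_boolAnd] at this
  simp at this

lemma derived_eq_leftzero : derivedVariety V3 proj1 = LeftZero := by
  ext B
  constructor
  · intro hB x y
    -- the identity x·y = x is in the theory of derived algebras
    have he : ((Term.app () ![Term.var 0, Term.var 1] : Term sig2 ℕ), Term.var 0) ∈
        Th {C | ∃ A ∈ V3, C = derive proj1 A} := by
      rintro C ⟨A, _, rfl⟩ v
      rfl
    have h2 := hB _ he (fun n => if n = 0 then x else y)
    simp only [Alg.eval] at h2
    have harg : (fun k : Fin 2 => (B.eval (fun n : ℕ => if n = 0 then x else y)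
        (![Term.var 0, Term.var 1] k))) = ![x, y] := by
      funext k; fin_cases k <;> simp [Alg.eval]
    rw [bop, ← harg]
    exact h2
  · intro hB e he v
    exact he B ⟨B, leftzero_in_V3 hB, leftzero_eq_derive hB⟩ v

/-- V₃ is not fluid: under σ(x·y) = x, the derived variety is the
variety of left-zero semigroups, a proper subvariety of V₃. -/
theorem V3_not_fluid :
    derivedVariety V3 proj1 = LeftZero ∧ LeftZero ⊂ V3 ∧ ¬ Fluid V3 := by
  have hne : LeftZero ≠ V3 := fun h => boolAnd_not_leftzero (h ▸ boolAnd_in_V3)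
  refine ⟨derived_eq_leftzero,
    ⟨leftzero_in_V3, fun h => hne (le_antisymm leftzero_in_V3 h)⟩, ?_⟩
  intro hf
  have := hf proj1 (derived_eq_leftzero ▸ leftzero_in_V3)
  rw [derived_eq_leftzero] at this
  exact hne this
end
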